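/- arXiv:2311.07977 — 3 statements merged into one kernel-verified Lean document; each statement's English description precedes it below -/
import Mathlib

section
/- Define g(δ) = cos²δ / (sin δ (1 − 2 sin δ)) for δ ∈ (0, π/6). Then g attains its minimum value 2(√3 + 2) at δ₀ = 2·arctan(2 + √3 − √(6 + 4√3)). -/
open Real

noncomputable def g5 (δ : ℝ) : ℝ :=
  (Real.cos δ) ^ 2 / (Real.sin δ * (1 - 2 * Real.sin δ))

noncomputable def δ₀ : ℝ :=
  2 * Real.arctan (2 + Real.sqrt 3 - Real.sqrt (6 + 4 * Real.sqrt 3))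

lemma sqrt3_sq : Real.sqrt 3 ^ 2 = 3 := Real.sq_sqrt (by norm_num)

lemma sqrt3_lt : Real.sqrt 3 < 2 := by
  nlinarith [sqrt3_sq, Real.sqrt_nonneg 3]

lemma sqrt3_gt : (3:ℝ)/2 < Real.sqrt 3 := by
  nlinarith [sqrt3_sq, Real.sqrt_nonneg 3]

lemma b_sq : Real.sqrt (6 + 4 * Real.sqrt 3) ^ 2 = 6 + 4 * Real.sqrt 3 :=
  Real.sq_sqrt (by nlinarith [sqrt3_gt])

lemma t_pos : 0 < 2 + Real.sqrt 3 - Real.sqrt (6 + 4 * Real.sqrt 3) := by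
  have h := Real.sqrt_nonneg (6 + 4 * Real.sqrt 3)
  nlinarith [b_sq, sqrt3_sq, Real.sqrt_nonneg 3]

lemma t_lt_one : 2 + Real.sqrt 3 - Real.sqrt (6 + 4 * Real.sqrt 3) < 1 := by
  have h := Real.sqrt_nonneg (6 + 4 * Real.sqrt 3)
  nlinarith [b_sq, sqrt3_sq, sqrt3_gt, sqrt3_lt]

lemma sin_d0 : Real.sin δ₀ = 2 - Real.sqrt 3 := by
  set t := 2 + Real.sqrt 3 - Real.sqrt (6 + 4 * Real.sqrt 3) with ht
  have hu : (0:ℝ) < 1 + t ^ 2 := by positivity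
  have hsu : Real.sqrt (1 + t ^ 2) ^ 2 = 1 + t ^ 2 := Real.sq_sqrt hu.le
  have hsupos : 0 < Real.sqrt (1 + t ^ 2) := Real.sqrt_pos.2 hu
  have hsin : Real.sin δ₀ = 2 * t / (1 + t ^ 2) := by
    rw [δ₀, Real.sin_two_mul, Real.sin_arctan, Real.cos_arctan]
    rw [← ht]
    field_simp
    rw [hsu]
  rw [hsin]
  rw [div_eq_iff (by positivity)]
  -- key identity : 1 + t^2 = 2*(2+√3)*t  and  (2-√3)(2+√3)=1
  nlinarith [b_sq, sqrt3_sq, t_pos, Real.sqrt_nonneg 3]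

lemma d0_mem : δ₀ ∈ Set.Ioo (0 : ℝ) (π / 6) := by
  have h1 : 0 < δ₀ := by
    have : Real.arctan 0 < Real.arctan (2 + Real.sqrt 3 - Real.sqrt (6 + 4 * Real.sqrt 3)) :=
      Real.arctan_strictMono t_pos
    rw [Real.arctan_zero] at this
    rw [δ₀]; linarith
  have h2 : δ₀ < π / 2 := by
    have : Real.arctan (2 + Real.sqrt 3 - Real.sqrt (6 + 4 * Real.sqrt 3)) < π / 4 := by
      calc Real.arctan (2 + Real.sqrt 3 - Real.sqrt (6 + 4 * Real.sqrt 3))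
          < Real.arctan 1 := Real.arctan_strictMono t_lt_one
        _ = π / 4 := Real.arctan_one
    rw [δ₀]; linarith
  refine ⟨h1, ?_⟩
  have hsin : Real.sin δ₀ < Real.sin (π / 6) := by
    rw [sin_d0, Real.sin_pi_div_six]
    nlinarith [sqrt3_gt]
  have hpi := Real.pi_pos
  by_contra hle
  push_neg at hle
  have : Real.sin (π / 6) ≤ Real.sin δ₀ := by
    rcases eq_or_lt_of_le hle with h | h
    · rw [h]
    · exact le_of_lt (Real.strictMonoOn_sin ⟨by linarith, by linarith⟩
        ⟨by linarith, h2.le⟩ h)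
  linarith

lemma denom_pos {δ : ℝ} (h : δ ∈ Set.Ioo (0 : ℝ) (π / 6)) :
    0 < Real.sin δ ∧ Real.sin δ < 1/2 := by
  obtain ⟨h1, h2⟩ := h
  have hpi := Real.pi_pos
  constructor
  · exact Real.sin_pos_of_pos_of_lt_pi h1 (by linarith)
  · have : Real.sin δ < Real.sin (π / 6) :=
      Real.strictMonoOn_sin ⟨by linarith, by linarith⟩ ⟨by linarith, by linarith⟩ h2
    rwa [Real.sin_pi_div_six] at this

theorem stmt_5 :
    (∀ δ ∈ Set.Ioo (0 : ℝ) (π / 6), 2 * (Real.sqrt 3 + 2) ≤ g5 δ) ∧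
    δ₀ ∈ Set.Ioo (0 : ℝ) (π / 6) ∧
    g5 δ₀ = 2 * (Real.sqrt 3 + 2) := by
  refine ⟨?_, d0_mem, ?_⟩
  · intro δ hδ
    obtain ⟨hs0, hs2⟩ := denom_pos hδ
    set s := Real.sin δ with hs
    have hcos : Real.cos δ ^ 2 = 1 - s ^ 2 := by
      have := Real.sin_sq_add_cos_sq δ
      linarith
    rw [g5, hcos, le_div_iff₀ (by nlinarith)]
    nlinarith [sq_nonneg (s - (2 - Real.sqrt 3)), sqrt3_sq, sqrt3_gt]
  · have hs : Real.sin δ₀ = 2 - Real.sqrt 3 := sin_d0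
    have hcos : Real.cos δ₀ ^ 2 = 1 - (2 - Real.sqrt 3) ^ 2 := by
      have := Real.sin_sq_add_cos_sq δ₀
      rw [hs] at this
      linarith
    rw [g5, hs, hcos]
    have hd : 0 < (2 - Real.sqrt 3) * (1 - 2 * (2 - Real.sqrt 3)) := by
      nlinarith [sqrt3_sq, sqrt3_gt, sqrt3_lt]
    rw [div_eq_iff (ne_of_gt hd)]
    nlinarith [sqrt3_sq]
end

section
/- Fix k ≥ 2, δ ∈ (0, arcsin(2^{1−k})), ε > 0, and s₁ > 0. Define recursively s_l = (1+ε) · 2^{l−1} cos²δ (1 − ∏_{j=1}^{l−1}(1 − s_j/2)) / (sin δ (1 − 2^{l−1} sin δ)) for 2 ≤ l ≤ k, assuming each s_j < 2 along the way. Then the sequence is strictly increasing: s_k > s_{k−1} > ⋯ > s₁. -/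
open Real Finset


lemma stmt_8_aux (ε c t p q P Q : ℝ) (hε : 0 < ε) (hc : 0 < c) (ht : 0 < t)
    (hp : 0 < p) (hq : q = 2 * p) (hP1 : P < 1) (hQP : Q < P) (h2 : q * t < 1) :
    (1 + ε) * p * c ^ 2 * (1 - P) / (t * (1 - p * t)) <
    (1 + ε) * q * c ^ 2 * (1 - Q) / (t * (1 - q * t)) := by
  subst hq
  have hpt : p * t < 1 := by nlinarith
  apply div_lt_div₀
  · have hApos : 0 < (1 + ε) * c ^ 2 * p := by positivity
    have hcomb : 0 < 1 + P - 2 * Q := by linarith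
    nlinarith [mul_pos hApos hcomb]
  · nlinarith [mul_nonneg (mul_nonneg ht.le hp.le) ht.le]
  · have hQ1 : 0 < 1 - Q := by linarith
    positivity
  · exact mul_pos ht (by linarith)

theorem stmt_8 (k : ℕ) (hk : 2 ≤ k) (δ : ℝ)
    (hδ : δ ∈ Set.Ioo (0 : ℝ) (Real.arcsin (1 / 2 ^ (k - 1))))
    (ε : ℝ) (hε : 0 < ε) (s : ℕ → ℝ) (hs1 : 0 < s 1)
    (hlt : ∀ j ∈ Finset.Icc 1 k, s j < 2)
    (hrec : ∀ l, 2 ≤ l → l ≤ k →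
      s l = (1 + ε) * 2 ^ (l - 1) * (Real.cos δ) ^ 2 *
        (1 - ∏ j ∈ Finset.Icc 1 (l - 1), (1 - s j / 2)) /
        (Real.sin δ * (1 - 2 ^ (l - 1) * Real.sin δ))) :
    ∀ l, 2 ≤ l → l ≤ k → s (l - 1) < s l := by
  obtain ⟨hδ0, hδk⟩ := hδ
  have hx1 : (1 : ℝ) / 2 ^ (k - 1) ≤ 1 := by
    rw [div_le_one (by positivity)]
    exact one_le_pow₀ (by norm_num)
  have hx0 : (0 : ℝ) < 1 / 2 ^ (k - 1) := by positivity
  have harc_le : Real.arcsin (1 / 2 ^ (k - 1)) ≤ π / 2 := Real.arcsin_le_pi_div_two _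
  have hδlt : δ < π / 2 := lt_of_lt_of_le hδk harc_le
  have hsinpos : 0 < Real.sin δ :=
    Real.sin_pos_of_pos_of_lt_pi hδ0 (hδlt.trans_le (by linarith [Real.pi_pos]))
  have hcospos : 0 < Real.cos δ :=
    Real.cos_pos_of_mem_Ioo ⟨by linarith [Real.pi_pos], hδlt⟩
  have hsinlt : Real.sin δ < 1 / 2 ^ (k - 1) := by
    calc Real.sin δ < Real.sin (Real.arcsin (1 / 2 ^ (k - 1))) := by
          apply Real.strictMonoOn_sin ⟨by linarith, hδlt.le⟩
            ⟨Real.neg_pi_div_two_le_arcsin _, harc_le⟩ hδk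
      _ = 1 / 2 ^ (k - 1) := Real.sin_arcsin (by linarith) hx1
  -- 2^(l-1) * sin δ < 1 for l ≤ k
  have hpow : ∀ l : ℕ, l ≤ k → (2 : ℝ) ^ (l - 1) * Real.sin δ < 1 := by
    intro l hl
    have h1 : (2 : ℝ) ^ (l - 1) ≤ 2 ^ (k - 1) :=
      pow_le_pow_right₀ (by norm_num) (Nat.sub_le_sub_right hl 1)
    have h2 : (2 : ℝ) ^ (k - 1) * Real.sin δ < 2 ^ (k - 1) * (1 / 2 ^ (k - 1)) :=
      mul_lt_mul_of_pos_left hsinlt (by positivity)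
    have h3 : (2 : ℝ) ^ (k - 1) * (1 / 2 ^ (k - 1)) = 1 := by field_simp
    nlinarith [mul_le_mul_of_nonneg_right h1 hsinpos.le]
  have hfac : ∀ j ∈ Finset.Icc 1 k, 0 < 1 - s j / 2 := by
    intro j hj; have := hlt j hj; linarith
  have hPpos : ∀ m : ℕ, m ≤ k → 0 < ∏ j ∈ Finset.Icc 1 m, (1 - s j / 2) := by
    intro m hm
    exact Finset.prod_pos fun j hj => hfac j (Finset.mem_Icc.2
      ⟨(Finset.mem_Icc.1 hj).1, le_trans (Finset.mem_Icc.1 hj).2 hm⟩)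
  -- positivity of s l and product < 1, by induction
  have key : ∀ l : ℕ, 1 ≤ l → l ≤ k →
      0 < s l ∧ (∏ j ∈ Finset.Icc 1 l, (1 - s j / 2)) < 1 := by
    intro l hl
    induction l, hl using Nat.le_induction with
    | base =>
      intro _
      refine ⟨hs1, ?_⟩
      rw [Finset.Icc_self, Finset.prod_singleton]
      linarith
    | succ n hn ih =>
      intro hnk
      have hnk' : n ≤ k := le_trans (Nat.le_succ n) hnk
      obtain ⟨hsn, hPn⟩ := ih hnk'
      have hPnpos := hPpos n hnk'
      have hden : 0 < Real.sin δ * (1 - 2 ^ (n + 1 - 1) * Real.sin δ) := by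
        have := hpow (n + 1) hnk
        exact mul_pos hsinpos (by linarith)
      have hsval := hrec (n + 1) (by omega) hnk
      have hspos : 0 < s (n + 1) := by
        rw [hsval]
        apply div_pos _ hden
        have : n + 1 - 1 = n := by omega
        rw [this]
        have h1 : 0 < 1 - ∏ j ∈ Finset.Icc 1 n, (1 - s j / 2) := by linarith
        positivity
      refine ⟨hspos, ?_⟩
      rw [Finset.prod_Icc_succ_top (by omega)]
      have hlt' := hlt (n + 1) (Finset.mem_Icc.2 ⟨by omega, hnk⟩)
      nlinarith
  intro l hl2 hlk
  rcases eq_or_lt_of_le hl2 with h2 | h3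
  · -- l = 2
    subst h2
    rw [hrec 2 le_rfl hlk]
    norm_num [Finset.Icc_self]
    have hden : 0 < Real.sin δ * (1 - 2 * Real.sin δ) := by
      have := hpow 2 hlk
      norm_num at this
      exact mul_pos hsinpos (by linarith)
    rw [lt_div_iff₀ hden]
    have hcos2 : Real.cos δ ^ 2 = 1 - Real.sin δ ^ 2 := by
      nlinarith [Real.sin_sq_add_cos_sq δ]
    rw [hcos2]
    have h1 : 0 < s 1 * (1 - Real.sin δ + Real.sin δ ^ 2) := by
      nlinarith [sq_nonneg (Real.sin δ - 1/2)]
    have h2 : 0 < ε * (s 1 * (1 - Real.sin δ ^ 2)) := by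
      have hs2 : Real.sin δ < 1 := by
        nlinarith [Real.sin_le_one δ, Real.neg_one_le_sin δ]
      have : 0 < 1 - Real.sin δ ^ 2 := by nlinarith
      positivity
    nlinarith
  · -- l ≥ 3
    obtain ⟨m, rfl⟩ : ∃ m, l = m + 2 := ⟨l - 2, by omega⟩
    have hm1 : 1 ≤ m := by omega
    have hm1k : m + 1 ≤ k := by omega
    have e1 : m + 2 - 1 = m + 1 := by omega
    have e2 : m + 1 - 1 = m := by omega
    simp only [e1]
    rw [hrec (m + 2) (by omega) hlk, hrec (m + 1) (by omega) hm1k]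
    simp only [e1, e2]
    obtain ⟨hsm1, hPm1⟩ := key (m + 1) (by omega) hm1k
    obtain ⟨_, hPm⟩ := key m hm1 (by omega)
    have hPmpos := hPpos m (by omega)
    have hPstep : (∏ j ∈ Finset.Icc 1 (m + 1), (1 - s j / 2))
        < ∏ j ∈ Finset.Icc 1 m, (1 - s j / 2) := by
      rw [Finset.prod_Icc_succ_top (by omega : 1 ≤ m + 1)]
      nlinarith
    have hpow2 : (2 : ℝ) ^ (m + 1) * Real.sin δ < 1 := by
      have := hpow (m + 2) hlk; rwa [e1] at this
    exact stmt_8_aux ε (Real.cos δ) (Real.sin δ) (2 ^ m) (2 ^ (m + 1)) _ _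
      hε hcospos hsinpos (by positivity) (by rw [pow_succ]; ring) hPm hPstep hpow2
end

section
/- For every k ≥ 2 there exist δ ∈ (0, arcsin(2^{1−k})) and a finite sequence α₁, …, α_k with 0 < α_l ≤ 1 for all l, α₁ > 0, and for each 2 ≤ l ≤ k: α_l > 2^{l−1} cos²δ (1 − ∏_{j=1}^{l−1}(1 − α_j/2)) / (sin δ (1 − 2^{l−1} sin δ)) > 0. -/
open Real Finset

private lemma one_sub_sum_le_prod_one_sub' (s : Finset ℕ) (f : ℕ → ℝ)
    (h0 : ∀ j ∈ s, 0 ≤ f j) (h1 : ∀ j ∈ s, f j ≤ 1) :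
    1 - ∑ j ∈ s, f j ≤ ∏ j ∈ s, (1 - f j) := by
  classical
  induction s using Finset.induction with
  | empty => simp
  | @insert a s ha ih =>
    rw [Finset.sum_insert ha, Finset.prod_insert ha]
    have h0' : ∀ j ∈ s, 0 ≤ f j := fun j hj => h0 j (Finset.mem_insert_of_mem hj)
    have h1' : ∀ j ∈ s, f j ≤ 1 := fun j hj => h1 j (Finset.mem_insert_of_mem hj)
    have ih' := ih h0' h1'
    have hfa : 0 ≤ f a := h0 a (Finset.mem_insert_self a s)
    have hfa1 : f a ≤ 1 := h1 a (Finset.mem_insert_self a s)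
    have hsum : 0 ≤ ∑ j ∈ s, f j := Finset.sum_nonneg h0'
    nlinarith [mul_le_mul_of_nonneg_left ih' (by linarith : (0:ℝ) ≤ 1 - f a), hsum, hfa]

theorem stmt_10 (k : ℕ) (hk : 2 ≤ k) :
    ∃ δ ∈ Set.Ioo (0 : ℝ) (Real.arcsin (1 / 2 ^ (k - 1))),
      ∃ α : ℕ → ℝ,
        (∀ l, 1 ≤ l → l ≤ k → 0 < α l ∧ α l ≤ 1) ∧
        (∀ l, 2 ≤ l → l ≤ k →
          α l > 2 ^ (l - 1) * (Real.cos δ) ^ 2 *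
              (1 - ∏ j ∈ Finset.Icc 1 (l - 1), (1 - α j / 2)) /
              (Real.sin δ * (1 - 2 ^ (l - 1) * Real.sin δ)) ∧
          2 ^ (l - 1) * (Real.cos δ) ^ 2 *
              (1 - ∏ j ∈ Finset.Icc 1 (l - 1), (1 - α j / 2)) /
              (Real.sin δ * (1 - 2 ^ (l - 1) * Real.sin δ)) > 0) := by
  set x : ℝ := 1 / 2 ^ (k - 1) with hxdef
  have hpow_pos : (0:ℝ) < 2 ^ (k - 1) := by positivity
  have hx0 : 0 < x := by positivity
  have hx1 : x ≤ 1 := by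
    rw [hxdef, div_le_one hpow_pos]
    exact one_le_pow₀ (by norm_num : (1:ℝ) ≤ 2)
  have hxm1 : -1 ≤ x := by linarith
  have hxval : (2:ℝ) ^ (k-1) * x = 1 := by
    rw [hxdef]; field_simp
  clear_value x
  have harc_pos : 0 < Real.arcsin x := Real.arcsin_pos.2 hx0
  have harc_le : Real.arcsin x ≤ π / 2 := Real.arcsin_le_pi_div_two x
  set δ : ℝ := Real.arcsin x / 2 with hδdef
  have hδ0 : 0 < δ := by positivity
  have hδlt : δ < Real.arcsin x := by
    rw [hδdef]; linarith
  clear_value δ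
  have hδlt2 : δ < π / 2 := lt_of_lt_of_le hδlt harc_le
  refine ⟨δ, ⟨hδ0, hδlt⟩, ?_⟩
  set s : ℝ := Real.sin δ with hsdef
  have hs0 : 0 < s := by
    rw [hsdef]
    exact Real.sin_pos_of_pos_of_lt_pi hδ0 (by linarith [Real.pi_pos])
  have hslt : s < x := by
    have := Real.strictMonoOn_sin (a := δ) (b := Real.arcsin x)
      ⟨by linarith [Real.pi_pos], le_of_lt hδlt2⟩
      ⟨by linarith [Real.pi_pos], harc_le⟩ hδlt
    rw [Real.sin_arcsin hxm1 hx1] at this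
    rw [hsdef]; exact this
  have hcos0 : 0 < Real.cos δ :=
    Real.cos_pos_of_mem_Ioo ⟨by linarith [Real.pi_pos], hδlt2⟩
  have hcos2 : Real.cos δ ^ 2 ≤ 1 := Real.cos_sq_le_one δ
  have hks : 2 ^ (k - 1) * s < 1 := by
    have h := mul_lt_mul_of_pos_left hslt hpow_pos
    linarith
  set D0 : ℝ := s * (1 - 2 ^ (k - 1) * s) with hD0def
  have hD0 : 0 < D0 := by
    rw [hD0def]; exact mul_pos hs0 (by linarith)
  clear_value D0
  set K : ℝ := 2 ^ (k - 1) * k / (2 * D0) with hKdef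
  have hK0 : 0 ≤ K := by
    rw [hKdef]
    apply div_nonneg (by positivity) (by linarith)
  clear_value K
  set R : ℝ := K + 2 with hRdef
  have hR1 : 1 ≤ R := by rw [hRdef]; linarith
  have hR0 : 0 < R := by linarith
  have hRK : K < R := by rw [hRdef]; linarith
  clear_value R
  set α : ℕ → ℝ := fun l => R ^ l / R ^ k with hαdef
  have hαpos : ∀ l, 0 < α l := by
    intro l; rw [hαdef]
    exact div_pos (pow_pos hR0 l) (pow_pos hR0 k)
  have hαmono : ∀ i j : ℕ, i ≤ j → α i ≤ α j := by
    intro i j hij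
    rw [hαdef]
    exact div_le_div_of_nonneg_right (pow_le_pow_right₀ hR1 hij) (pow_pos hR0 k).le
  have hαle1 : ∀ l, l ≤ k → α l ≤ 1 := by
    intro l hl
    rw [hαdef]
    exact div_le_one_of_le₀ (pow_le_pow_right₀ hR1 hl) (pow_pos hR0 k).le
  have hαrec : ∀ l : ℕ, 1 ≤ l → α l = R * α (l - 1) := by
    intro l hl
    obtain ⟨m, rfl⟩ : ∃ m, l = m + 1 := ⟨l - 1, by omega⟩
    rw [hαdef]
    show R ^ (m + 1) / R ^ k = R * (R ^ (m + 1 - 1) / R ^ k)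
    rw [Nat.add_sub_cancel, pow_succ]
    ring
  clear_value α
  refine ⟨α, fun l hl1 hlk => ⟨hαpos l, hαle1 l hlk⟩, ?_⟩
  intro l hl2 hlk
  have hl1 : 1 ≤ l - 1 := by omega
  have hl1k : l - 1 ≤ k := by omega
  set P : ℝ := ∏ j ∈ Finset.Icc 1 (l - 1), (1 - α j / 2) with hPdef
  have hmem : ∀ j ∈ Finset.Icc 1 (l - 1), 0 < α j ∧ α j ≤ 1 := by
    intro j hj
    rw [Finset.mem_Icc] at hj
    exact ⟨hαpos j, hαle1 j (by omega)⟩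
  have hPlt1 : P < 1 := by
    rw [hPdef]
    calc ∏ j ∈ Finset.Icc 1 (l-1), (1 - α j / 2)
        < ∏ j ∈ Finset.Icc 1 (l-1), (1:ℝ) := by
          apply Finset.prod_lt_prod_of_nonempty
          · intro i hi
            have := hmem i hi
            linarith [this.1, this.2]
          · intro i hi
            have := (hmem i hi).1
            linarith
          · exact ⟨1, Finset.mem_Icc.2 ⟨le_refl 1, hl1⟩⟩
      _ = 1 := Finset.prod_const_one
  have hsum_le : 1 - P ≤ ∑ j ∈ Finset.Icc 1 (l-1), α j / 2 := by
    have := one_sub_sum_le_prod_one_sub' (Finset.Icc 1 (l-1)) (fun j => α j / 2)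
      (fun j hj => by linarith [(hmem j hj).1]) (fun j hj => by linarith [(hmem j hj).2])
    rw [hPdef]
    linarith [this]
  have hsum_bound : ∑ j ∈ Finset.Icc 1 (l-1), α j / 2 ≤ (k : ℝ) * (α (l-1) / 2) := by
    calc ∑ j ∈ Finset.Icc 1 (l-1), α j / 2
        ≤ (Finset.Icc 1 (l-1)).card • (α (l-1) / 2) := by
          apply Finset.sum_le_card_nsmul
          intro j hj
          rw [Finset.mem_Icc] at hj
          have := hαmono j (l-1) hj.2
          linarith
      _ = ((l-1 : ℕ) : ℝ) * (α (l-1) / 2) := by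
          rw [Nat.card_Icc, Nat.add_sub_cancel, nsmul_eq_mul]
      _ ≤ (k : ℝ) * (α (l-1) / 2) := by
          apply mul_le_mul_of_nonneg_right
          · exact_mod_cast hl1k
          · linarith [hαpos (l-1)]
  have h1P : 1 - P ≤ (k : ℝ) * α (l-1) / 2 := by linarith
  have h1P0 : 0 < 1 - P := by linarith
  clear_value P
  have hpowle : (2:ℝ) ^ (l-1) ≤ 2 ^ (k-1) :=
    pow_le_pow_right₀ (by norm_num) (by omega)
  have hpowpos : (0:ℝ) < 2 ^ (l-1) := by positivity
  have hls : 2 ^ (l-1) * s < 1 := by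
    have : (2:ℝ)^(l-1) * s ≤ 2^(k-1) * s := mul_le_mul_of_nonneg_right hpowle hs0.le
    linarith
  set D : ℝ := s * (1 - 2 ^ (l-1) * s) with hDdef
  have hD : 0 < D := by
    rw [hDdef]; exact mul_pos hs0 (by linarith)
  have hD0leD : D0 ≤ D := by
    rw [hDdef, hD0def]
    apply mul_le_mul_of_nonneg_left _ hs0.le
    have : (2:ℝ)^(l-1) * s ≤ 2^(k-1) * s := mul_le_mul_of_nonneg_right hpowle hs0.le
    linarith
  clear_value D
  set N : ℝ := 2 ^ (l-1) * Real.cos δ ^ 2 * (1 - P) with hNdef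
  have hN0 : 0 < N := by
    rw [hNdef]
    exact mul_pos (mul_pos hpowpos (pow_pos hcos0 2)) h1P0
  set N0 : ℝ := 2 ^ (k-1) * ((k : ℝ) * α (l-1) / 2) with hN0def
  have hN0nonneg : 0 ≤ N0 := by
    rw [hN0def]
    apply mul_nonneg hpow_pos.le
    apply div_nonneg (mul_nonneg (Nat.cast_nonneg k) (hαpos (l-1)).le) (by norm_num)
  have hNle : N ≤ N0 := by
    rw [hNdef, hN0def]
    have h2 : (2:ℝ)^(l-1) * Real.cos δ ^ 2 ≤ 2^(k-1) := by
      calc (2:ℝ)^(l-1) * Real.cos δ ^ 2 ≤ 2^(l-1) * 1 :=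
            mul_le_mul_of_nonneg_left hcos2 hpowpos.le
        _ = 2^(l-1) := by ring
        _ ≤ 2^(k-1) := hpowle
    calc (2:ℝ)^(l-1) * Real.cos δ ^ 2 * (1 - P)
        ≤ 2^(k-1) * (1 - P) := mul_le_mul_of_nonneg_right h2 h1P0.le
      _ ≤ 2^(k-1) * ((k:ℝ) * α (l-1) / 2) := mul_le_mul_of_nonneg_left h1P hpow_pos.le
  clear_value N N0
  have hBle : N / D ≤ N0 / D0 := div_le_div₀ hN0nonneg hNle hD0 hD0leD
  have hN0D0 : N0 / D0 = K * α (l-1) := by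
    rw [hN0def, hKdef]
    field_simp
  have hstep : K * α (l-1) < α l := by
    rw [hαrec l (by omega)]
    exact mul_lt_mul_of_pos_right hRK (hαpos (l-1))
  have hmain : N / D < α l := lt_of_le_of_lt (hBle.trans (le_of_eq hN0D0)) hstep
  exact ⟨hmain, div_pos hN0 hD⟩
end
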